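/- If a : [1,p] → ℤ≥0 and b : [1,q] → ℤ≥0 are twisting functions and the filtered modules S^p[-a] and S^q[-b] are isomorphic (as filtered modules), then p = q and a equals b up to a permutation of indices. -/

import Mathlib

open MvPolynomial

noncomputable section

/-- The space of polynomials in `n` variables of total degree at most `d`. -/
def polyDegLE (F : Type) [Field F] (n : ℕ) (d : ℤ) :
    Submodule F (MvPolynomial (Fin n) F) where
  carrier := {f | ∀ m ∈ f.support, ((m.sum fun _ e => e : ℕ) : ℤ) ≤ d}
  add_mem' := fun hf hg m hm =>
    (Finset.mem_union.1 (MvPolynomial.support_add hm)).elim (hf m) (hg m)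
  zero_mem' := by simp
  smul_mem' := fun c f hf m hm => hf m (MvPolynomial.support_smul hm)

/-- The filtration of `S^p[-a]` for a twisting function `a : Fin p → ℕ`:
`filt F n p a d = { f : S^p | ∀ i, a i + deg (f i) ≤ d } = S^p[-a]_{≤ d}`. -/
def filt (F : Type) [Field F] (n p : ℕ) (a : Fin p → ℕ) (d : ℤ) :
    Submodule F (Fin p → MvPolynomial (Fin n) F) :=
  Submodule.pi Set.univ fun i => polyDegLE F n (d - a i)

/- ### Auxiliary material -/

section Aux

variable (F : Type) [Field F] (n : ℕ)

/-- Inclusion of constant vectors, as an `F`-linear map. -/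
def iotaL (r : ℕ) : (Fin r → F) →ₗ[F] (Fin r → MvPolynomial (Fin n) F) where
  toFun c i := C (c i)
  map_add' x y := funext fun i => by simp
  map_smul' x c := funext fun i => by
    simp [MvPolynomial.smul_eq_C_mul, map_mul]

/-- Constant coefficients of vectors of polynomials, as an `F`-linear map. -/
def epsL (r : ℕ) : (Fin r → MvPolynomial (Fin n) F) →ₗ[F] (Fin r → F) where
  toFun f i := constantCoeff (f i)
  map_add' x y := funext fun i => by simp
  map_smul' x f := funext fun i => by
    simp [MvPolynomial.constantCoeff_smul]

@[simp] lemma iotaL_apply (r : ℕ) (c : Fin r → F) (i : Fin r) :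
    iotaL F n r c i = C (c i) := rfl

@[simp] lemma epsL_apply (r : ℕ) (f : Fin r → MvPolynomial (Fin n) F) (i : Fin r) :
    epsL F n r f i = constantCoeff (f i) := rfl

variable {F n}

lemma mem_filt_iff {p : ℕ} (a : Fin p → ℕ) (d : ℤ) (f : Fin p → MvPolynomial (Fin n) F) :
    f ∈ filt F n p a d ↔
      ∀ i, ∀ m ∈ (f i).support, ((m.sum fun _ e => e : ℕ) : ℤ) ≤ d - a i := by
  rw [filt, Submodule.mem_pi]
  exact ⟨fun h i => h i (Set.mem_univ i), fun h i _ => h i⟩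

lemma cc_zero_of_linear {p q : ℕ}
    (u : (Fin p → MvPolynomial (Fin n) F) →ₗ[MvPolynomial (Fin n) F]
         (Fin q → MvPolynomial (Fin n) F))
    (g : Fin p → MvPolynomial (Fin n) F)
    (hg : ∀ i, constantCoeff (g i) = 0) (j : Fin q) :
    constantCoeff (u g j) = 0 := by
  rw [LinearMap.pi_apply_eq_sum_univ u g, Finset.sum_apply, map_sum]
  refine Finset.sum_eq_zero fun i _ => ?_
  rw [Pi.smul_apply, smul_eq_mul, map_mul, hg i, zero_mul]

lemma C_vec_mem_filt {p : ℕ} (a : Fin p → ℕ) (d : ℤ) (c : Fin p → F)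
    (hc : ∀ i, ¬ ((a i : ℤ) ≤ d) → c i = 0) :
    (fun i => (C (c i) : MvPolynomial (Fin n) F)) ∈ filt F n p a d := by
  rw [mem_filt_iff]
  intro i m hm
  by_cases hci : c i = 0
  · rw [hci] at hm; simp at hm
  · have h0 : m = 0 := by
      have hsub := MvPolynomial.support_monomial_subset (s := (0 : Fin n →₀ ℕ)) (a := c i)
      rw [C_apply] at hm
      exact Finset.mem_singleton.1 (hsub hm)
    subst h0
    have hai : (a i : ℤ) ≤ d := by
      by_contra h; exact hci (hc i h)
    simp only [Finsupp.sum_zero_index, Nat.cast_zero]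
    omega

lemma eq_zero_of_mem_filt {q : ℕ} (b : Fin q → ℕ) (d : ℤ)
    (f : Fin q → MvPolynomial (Fin n) F) (hf : f ∈ filt F n q b d)
    (j : Fin q) (hj : ¬ ((b j : ℤ) ≤ d)) : f j = 0 := by
  rw [mem_filt_iff] at hf
  rw [← MvPolynomial.support_eq_empty]
  by_contra h
  obtain ⟨m, hm⟩ := Finset.nonempty_iff_ne_empty.2 h
  have h1 := hf j m hm
  have h2 : (0 : ℤ) ≤ ((m.sum fun _ e => e : ℕ) : ℤ) := Int.ofNat_nonneg _
  omega

lemma cancel_aux {p q : ℕ}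
    (e : (Fin p → MvPolynomial (Fin n) F) ≃ₗ[MvPolynomial (Fin n) F]
         (Fin q → MvPolynomial (Fin n) F)) (c : Fin p → F) :
    epsL F n p (e.symm (iotaL F n q (epsL F n q (e (iotaL F n p c))))) = c := by
  funext i
  have hg : ∀ j, constantCoeff
      ((iotaL F n q (epsL F n q (e (iotaL F n p c))) - e (iotaL F n p c)) j) = 0 := by
    intro j; simp
  have hz := cc_zero_of_linear
    (e.symm : (Fin q → MvPolynomial (Fin n) F) →ₗ[MvPolynomial (Fin n) F] _)
    _ hg i
  rw [map_sub] at hz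
  rw [Pi.sub_apply, map_sub, sub_eq_zero] at hz
  calc epsL F n p (e.symm (iotaL F n q (epsL F n q (e (iotaL F n p c))))) i
      = constantCoeff ((e.symm (iotaL F n q (epsL F n q (e (iotaL F n p c))))) i) := rfl
    _ = constantCoeff ((e.symm (e (iotaL F n p c))) i) := hz
    _ = c i := by rw [e.symm_apply_apply]; simp

/-- The linear equivalence between the "pi" submodule and the product of submodules. -/
def piSubEquiv {r : ℕ} (f : Fin r → Submodule F F) :
    (Submodule.pi Set.univ f) ≃ₗ[F] (∀ i, f i) where
  toFun x := fun i => ⟨x.1 i, x.2 i (Set.mem_univ i)⟩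
  map_add' _ _ := rfl
  map_smul' _ _ := rfl
  invFun y := ⟨fun i => (y i : F), fun i _ => (y i).2⟩
  left_inv _ := rfl
  right_inv _ := rfl

lemma finrank_pi_ite {r : ℕ} (P : Fin r → Prop) [DecidablePred P] :
    Module.finrank F
      (Submodule.pi Set.univ fun i => if P i then (⊤ : Submodule F F) else ⊥)
      = (Finset.univ.filter P).card := by
  rw [(piSubEquiv _).finrank_eq, Module.finrank_pi_fintype, Finset.card_filter]
  refine Finset.sum_congr rfl fun i _ => ?_
  by_cases h : P i
  · rw [if_pos h, if_pos h, finrank_top, Module.finrank_self]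
  · rw [if_neg h, if_neg h, finrank_bot]

lemma perm_of_counts {p : ℕ} (a b : Fin p → ℕ)
    (h : ∀ d : ℕ, Fintype.card {i // a i ≤ d} = Fintype.card {i // b i ≤ d}) :
    ∃ σ : Fin p ≃ Fin p, ∀ i, b (σ i) = a i := by
  classical
  set σa := Tuple.sort a with hσa
  set σb := Tuple.sort b with hσb
  have key : ∀ j, a (σa j) = b (σb j) := by
    intro j
    have e1 : ∀ d : ℕ, Fintype.card {i // (a ∘ σa) i ≤ d} = Fintype.card {i // a i ≤ d} :=
      fun d => Fintype.card_congr (σa.subtypeEquiv fun i => Iff.rfl)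
    have e2 : ∀ d : ℕ, Fintype.card {i // (b ∘ σb) i ≤ d} = Fintype.card {i // b i ≤ d} :=
      fun d => Fintype.card_congr (σb.subtypeEquiv fun i => Iff.rfl)
    have h1 : ∀ d, a (σa j) ≤ d ↔ b (σb j) ≤ d := by
      intro d
      have t1 := Tuple.lt_card_le_iff_apply_le_of_monotone (f := a ∘ σa) (a := d)
        (Tuple.monotone_sort a) (j := j)
      rw [← Fintype.card_subtype] at t1
      have t2 := Tuple.lt_card_le_iff_apply_le_of_monotone (f := b ∘ σb) (a := d)
        (Tuple.monotone_sort b) (j := j)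
      rw [← Fintype.card_subtype] at t2
      constructor
      · intro hle
        exact t2.mp (by rw [e2 d, ← h d, ← e1 d]; exact t1.mpr hle)
      · intro hle
        exact t1.mp (by rw [e1 d, h d, ← e2 d]; exact t2.mpr hle)
    exact le_antisymm ((h1 _).mpr le_rfl) ((h1 _).mp le_rfl)
  refine ⟨σa.symm.trans σb, fun i => ?_⟩
  have := key (σa.symm i)
  simp only [Equiv.trans_apply]
  rw [← this, Equiv.apply_symm_apply]

end Aux

/-- if `S^p[-a] ≃ S^q[-b]` as filtered modules (an `S`-linear
isomorphism `e` such that both `e` and `e⁻¹` preserve the filtrations), then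
`p = q` and `a = b` up to a permutation of the indices. -/
theorem filtered_free_iso_rigidity (F : Type) [Field F] (n : ℕ)
    (p q : ℕ) (a : Fin p → ℕ) (b : Fin q → ℕ)
    (e : (Fin p → MvPolynomial (Fin n) F) ≃ₗ[MvPolynomial (Fin n) F]
         (Fin q → MvPolynomial (Fin n) F))
    (he : ∀ d : ℤ, ∀ f ∈ filt F n p a d, e f ∈ filt F n q b d)
    (he' : ∀ d : ℤ, ∀ g ∈ filt F n q b d, e.symm g ∈ filt F n p a d) :
    p = q ∧ ∃ σ : Fin p ≃ Fin q, ∀ i, b (σ i) = a i := by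
  classical
  -- the induced F-linear equivalence on "constant vectors"
  let EE : (Fin p → F) ≃ₗ[F] (Fin q → F) :=
    LinearEquiv.ofLinear
      ((epsL F n q).comp
        ((LinearEquiv.restrictScalars F e).toLinearMap.comp (iotaL F n p)))
      ((epsL F n p).comp
        ((LinearEquiv.restrictScalars F e).symm.toLinearMap.comp (iotaL F n q)))
      (LinearMap.ext fun w => cancel_aux e.symm w)
      (LinearMap.ext fun c => cancel_aux e c)
  have hEapp : ∀ (c : Fin p → F) (j : Fin q),
      EE c j = constantCoeff ((e (iotaL F n p c)) j) := fun _ _ => rfl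
  have hEsymm : ∀ (w : Fin q → F) (i : Fin p),
      EE.symm w i = constantCoeff ((e.symm (iotaL F n q w)) i) := fun _ _ => rfl
  -- count preservation
  have hcards : ∀ d : ℤ,
      (Finset.univ.filter fun i => (a i : ℤ) ≤ d).card
        = (Finset.univ.filter fun j => (b j : ℤ) ≤ d).card := by
    intro d
    have hfwd : ∀ c ∈ (Submodule.pi Set.univ fun i =>
        if (a i : ℤ) ≤ d then (⊤ : Submodule F F) else ⊥),
        EE c ∈ (Submodule.pi Set.univ fun j =>
          if (b j : ℤ) ≤ d then (⊤ : Submodule F F) else ⊥) := by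
      intro c hc
      rw [Submodule.mem_pi] at hc ⊢
      intro j _
      by_cases hj : (b j : ℤ) ≤ d
      · rw [if_pos hj]; trivial
      · rw [if_neg hj, Submodule.mem_bot]
        have hc0 : ∀ i, ¬ ((a i : ℤ) ≤ d) → c i = 0 := by
          intro i hi
          have := hc i (Set.mem_univ i)
          rw [if_neg hi, Submodule.mem_bot] at this
          exact this
        have h1 : (fun i => (C (c i) : MvPolynomial (Fin n) F)) ∈ filt F n p a d :=
          C_vec_mem_filt a d c hc0
        have h2 := he d _ h1
        have h3 := eq_zero_of_mem_filt b d _ h2 j hj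
        rw [hEapp c j]
        calc constantCoeff ((e (iotaL F n p c)) j)
            = constantCoeff ((e fun i => (C (c i) : MvPolynomial (Fin n) F)) j) := rfl
          _ = 0 := by rw [h3]; simp
    have hbwd : ∀ w ∈ (Submodule.pi Set.univ fun j =>
        if (b j : ℤ) ≤ d then (⊤ : Submodule F F) else ⊥),
        EE.symm w ∈ (Submodule.pi Set.univ fun i =>
          if (a i : ℤ) ≤ d then (⊤ : Submodule F F) else ⊥) := by
      intro w hw
      rw [Submodule.mem_pi] at hw ⊢
      intro i _
      by_cases hi : (a i : ℤ) ≤ d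
      · rw [if_pos hi]; trivial
      · rw [if_neg hi, Submodule.mem_bot]
        have hw0 : ∀ j, ¬ ((b j : ℤ) ≤ d) → w j = 0 := by
          intro j hj
          have := hw j (Set.mem_univ j)
          rw [if_neg hj, Submodule.mem_bot] at this
          exact this
        have h1 : (fun j => (C (w j) : MvPolynomial (Fin n) F)) ∈ filt F n q b d :=
          C_vec_mem_filt b d w hw0
        have h2 := he' d _ h1
        have h3 := eq_zero_of_mem_filt a d _ h2 i hi
        rw [hEsymm w i]
        calc constantCoeff ((e.symm (iotaL F n q w)) i)
            = constantCoeff ((e.symm fun j => (C (w j) : MvPolynomial (Fin n) F)) i) := rfl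
          _ = 0 := by rw [h3]; simp
    have hmap : (Submodule.pi Set.univ fun i =>
        if (a i : ℤ) ≤ d then (⊤ : Submodule F F) else ⊥).map
          (EE : (Fin p → F) →ₗ[F] (Fin q → F))
        = (Submodule.pi Set.univ fun j =>
            if (b j : ℤ) ≤ d then (⊤ : Submodule F F) else ⊥) := by
      apply le_antisymm
      · exact Submodule.map_le_iff_le_comap.2 fun c hc => hfwd c hc
      · intro w hw
        exact ⟨EE.symm w, hbwd w hw, EE.apply_symm_apply w⟩
    have hfr := (EE.submoduleMap (Submodule.pi Set.univ fun i =>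
        if (a i : ℤ) ≤ d then (⊤ : Submodule F F) else ⊥)).finrank_eq
    rw [hmap] at hfr
    calc (Finset.univ.filter fun i => (a i : ℤ) ≤ d).card
        = Module.finrank F (Submodule.pi Set.univ fun i =>
            if (a i : ℤ) ≤ d then (⊤ : Submodule F F) else ⊥) :=
          (finrank_pi_ite _).symm
      _ = Module.finrank F (Submodule.pi Set.univ fun j =>
            if (b j : ℤ) ≤ d then (⊤ : Submodule F F) else ⊥) := hfr
      _ = (Finset.univ.filter fun j => (b j : ℤ) ≤ d).card := finrank_pi_ite _
  -- p = q
  have hpq : p = q := by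
    have := EE.finrank_eq
    rwa [Module.finrank_fin_fun, Module.finrank_fin_fun] at this
  subst hpq
  refine ⟨rfl, ?_⟩
  -- counts over ℕ
  have hcount : ∀ d : ℕ, Fintype.card {i // a i ≤ d} = Fintype.card {i // b i ≤ d} := by
    intro d
    rw [Fintype.card_subtype, Fintype.card_subtype]
    have h1 : (Finset.univ.filter fun i => a i ≤ d)
        = (Finset.univ.filter fun i => (a i : ℤ) ≤ (d : ℤ)) :=
      Finset.filter_congr fun i _ => (Nat.cast_le (α := ℤ)).symm
    have h2 : (Finset.univ.filter fun i => b i ≤ d)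
        = (Finset.univ.filter fun i => (b i : ℤ) ≤ (d : ℤ)) :=
      Finset.filter_congr fun i _ => (Nat.cast_le (α := ℤ)).symm
    rw [h1, h2]
    exact hcards (d : ℤ)
  exact perm_of_counts a b hcount
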